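/- Averaged swap decomposition: Let f be submodular and monotone with f(∅) ≥ 0, |T| = k, u ∉ T. Then (1/k)·Σ_{y∈T}[f(T ∪ {u} \ {y}) − f(T)] ≥ (f(T ∪ {u}) − f(T)) − f(T)/k. -/

import Mathlib

def Submodular {Ω : Type*} [DecidableEq Ω] (f : Finset Ω → ℝ) : Prop :=
  ∀ S T : Finset Ω, S ⊆ T → ∀ x ∉ T, f (insert x T) - f T ≤ f (insert x S) - f S

lemma telescope_aux {Ω : Type*} [DecidableEq Ω] (f : Finset Ω → ℝ)
    (hsub : Submodular f) (T : Finset Ω) :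
    ∑ y ∈ T, (f T - f (T.erase y)) ≤ f T - f ∅ := by
  induction T using Finset.induction_on with
  | empty => simp
  | @insert x S hx ih =>
    rw [Finset.sum_insert hx, Finset.erase_insert hx]
    have h1 : ∀ y ∈ S, f (insert x S) - f ((insert x S).erase y)
        ≤ f S - f (S.erase y) := by
      intro y hy
      have hyx : y ≠ x := fun h => hx (h ▸ hy)
      have he : (insert x S).erase y = insert x (S.erase y) :=
        Finset.erase_insert_of_ne hyx.symm
      have h2 : insert y ((insert x S).erase y) = insert x S := by
        rw [Finset.insert_erase (Finset.mem_insert_of_mem hy)]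
      have h3 : insert y (S.erase y) = S := Finset.insert_erase hy
      have h4 : y ∉ (insert x S).erase y := Finset.notMem_erase _ _
      have hsubset : S.erase y ⊆ (insert x S).erase y := by
        rw [he]; exact Finset.subset_insert _ _
      have := hsub (S.erase y) ((insert x S).erase y) hsubset y h4
      rw [h2, h3] at this
      linarith
    have hsum := Finset.sum_le_sum h1
    have hsub2 : f (insert x S) - f S ≤ f (insert x S) - f S := le_refl _
    calc f (insert x S) - f S + ∑ y ∈ S, (f (insert x S) - f ((insert x S).erase y))
        ≤ f (insert x S) - f S + ∑ y ∈ S, (f S - f (S.erase y)) := by linarith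
      _ ≤ f (insert x S) - f S + (f S - f ∅) := by linarith
      _ = f (insert x S) - f ∅ := by ring

theorem stmt_10 {Ω : Type*} [DecidableEq Ω] (f : Finset Ω → ℝ)
    (hsub : Submodular f) (hmono : Monotone f) (h0 : 0 ≤ f ∅)
    (k : ℕ) (hk : 0 < k) (T : Finset Ω) (hTk : T.card = k)
    (u : Ω) (hu : u ∉ T) :
    (∑ y ∈ T, (f (insert u (T.erase y)) - f T)) / k
      ≥ (f (insert u T) - f T) - f T / k := by
  have hkpos : (0:ℝ) < k := by exact_mod_cast hk
  have hpt : ∀ y ∈ T, (f (insert u T) - f T) + (f (T.erase y) - f T)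
      ≤ f (insert u (T.erase y)) - f T := by
    intro y hy
    have := hsub (T.erase y) T (Finset.erase_subset _ _) u hu
    linarith
  have hsum := Finset.sum_le_sum hpt
  rw [Finset.sum_add_distrib, Finset.sum_const, hTk] at hsum
  have htel : ∑ y ∈ T, (f T - f (T.erase y)) ≤ f T - f ∅ := telescope_aux f hsub T
  have htel2 : -(f T) ≤ ∑ y ∈ T, (f (T.erase y) - f T) := by
    have : ∑ y ∈ T, (f (T.erase y) - f T) = -∑ y ∈ T, (f T - f (T.erase y)) := by
      rw [← Finset.sum_neg_distrib]; apply Finset.sum_congr rfl; intro y _; ring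
    rw [this]; linarith
  rw [ge_iff_le, sub_le_iff_le_add, ← add_div, le_div_iff₀ hkpos]
  rw [nsmul_eq_mul] at hsum
  linarith
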